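/- Let q ≥ 1 be an integer and b_k, λ_∞ as in the context. Then λ_∞(e^{iθ}) = b_0 + 2·Σ_{k=1}^{q} b_k cos(kθ) is real for every real θ; λ_∞(1) = 0; and λ_∞(e^{iθ}) < 0 for all 0 < θ < 2π. -/

import Mathlib

/-- Optimal centered finite-difference coefficients for the second derivative on
the stencil `{-q, …, q}`. -/
noncomputable def bCoef (q : ℕ) (k : ℤ) : ℝ :=
  if k = 0 then
    -∑ j ∈ Finset.Icc 1 q, 2 / (j : ℝ) ^ 2
  else
    -(2 * (-1 : ℝ) ^ k / (k : ℝ) ^ 2) *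
      ((Nat.factorial q * Nat.factorial q : ℕ) : ℝ) /
      ((Nat.factorial ((q : ℤ) + k).toNat * Nat.factorial ((q : ℤ) - k).toNat : ℕ) : ℝ)

/-- The symbol `λ_∞(s) = Σ_{k=-q}^{q} b_k s^k` of the diffusion discretization. -/
noncomputable def lamInf (q : ℕ) (s : ℂ) : ℂ :=
  ∑ k ∈ Finset.Icc (-(q : ℤ)) (q : ℤ), (bCoef q k : ℂ) * s ^ k


-- (bCoef defined above)

noncomputable def cC (m : ℕ) : ℝ := 2 / ((m:ℝ)^2 * ((2*m).choose m))

lemma neg_one_zpow_neg (k : ℤ) : (-1 : ℝ) ^ (-k) = (-1 : ℝ) ^ k := by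
  rcases Int.even_or_odd k with h | h
  · rw [h.neg_one_zpow, (h.neg).neg_one_zpow]
  · rw [h.neg_one_zpow, (h.neg).neg_one_zpow]

lemma bCoef_neg (q : ℕ) (k : ℤ) : bCoef q (-k) = bCoef q k := by
  rcases eq_or_ne k 0 with rfl | hk
  · simp
  · unfold bCoef
    rw [if_neg (by simpa using hk), if_neg hk, neg_one_zpow_neg]
    rw [show (q:ℤ) + -k = (q:ℤ) - k by ring, show (q:ℤ) - -k = (q:ℤ) + k by ring]
    push_cast
    ring

lemma fact_ne (n : ℕ) : ((n.factorial : ℝ)) ≠ 0 := by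
  exact_mod_cast (Nat.factorial_pos n).ne'

lemma hC_fact (q : ℕ) :
    (((2*q+2).choose (q+1) : ℝ)) * ((q+1).factorial * (q+1).factorial) = (2*q+2).factorial := by
  have h := Nat.choose_mul_factorial_mul_factorial (show q+1 ≤ 2*q+2 by omega)
  have h2 : 2*q+2 - (q+1) = q+1 := by omega
  rw [h2] at h
  push_cast [← h]
  ring

lemma hCA_fact (q A B : ℕ) (hAB : A + B = 2*q) :
    (((2*q+2).choose (A+1) : ℝ)) * ((A+1).factorial * (B+1).factorial) = (2*q+2).factorial := by
  have h := Nat.choose_mul_factorial_mul_factorial (show A+1 ≤ 2*q+2 by omega)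
  have h2 : 2*q+2 - (A+1) = B+1 := by omega
  rw [h2] at h
  push_cast [← h]
  ring

lemma cC_succ (q : ℕ) : cC (q+1) = 2 / (((q:ℝ)+1)^2 * ((2*q+2).choose (q+1))) := by
  unfold cC
  rw [show 2*(q+1) = 2*q+2 by ring]
  push_cast
  ring_nf

lemma hCne (q : ℕ) : (((2*q+2).choose (q+1) : ℝ)) ≠ 0 := by
  exact_mod_cast (Nat.choose_pos (show q+1 ≤ 2*q+2 by omega)).ne'

lemma fact_succ_cast (n : ℕ) : (((n+1).factorial : ℝ)) = ((n:ℝ)+1) * n.factorial := by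
  rw [Nat.factorial_succ]; push_cast; ring

-- cC (q+1) * choose(2q+2, A+1) = 2 q!² / ((A+1)! (B+1)!)
lemma main_id2 (q A B : ℕ) (hAB : A + B = 2*q) :
    cC (q+1) * ((2*q+2).choose (A+1) : ℝ)
      = 2 * ((q.factorial : ℝ) * q.factorial) / ((A+1).factorial * (B+1).factorial) := by
  rw [cC_succ]
  have h3 : (((2*q+2).choose (A+1) : ℝ)) * ((A+1).factorial * (B+1).factorial)
      = (((2*q+2).choose (q+1) : ℝ)) * ((q+1).factorial * (q+1).factorial) := by
    rw [hC_fact q, hCA_fact q A B hAB]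
  rw [fact_succ_cast q] at h3
  have h4 := hCne q
  have h5 := fact_ne (A+1)
  have h6 := fact_ne (B+1)
  have h7 : ((q:ℝ)+1) ≠ 0 := by positivity
  field_simp
  linear_combination h3

-- (q+1)!²/((A+1)!(B+1)!) - q!²/(A!B!) = x² q!²/((A+1)!(B+1)!)
lemma main_id1 (q A B : ℕ) (x : ℝ)
    (hx : ((A:ℝ)+1) * ((B:ℝ)+1) = ((q:ℝ)+1)^2 - x^2) :
    ((q+1).factorial : ℝ) * (q+1).factorial / ((A+1).factorial * (B+1).factorial)
      - (q.factorial : ℝ) * q.factorial / (A.factorial * B.factorial)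
      = x^2 * ((q.factorial : ℝ) * q.factorial) / ((A+1).factorial * (B+1).factorial) := by
  rw [fact_succ_cast q, fact_succ_cast A, fact_succ_cast B]
  have h5 := fact_ne A
  have h6 := fact_ne B
  have hA1 : ((A:ℝ)+1) ≠ 0 := by positivity
  have hB1 : ((B:ℝ)+1) ≠ 0 := by positivity
  have hD1 : (((A:ℝ)+1) * A.factorial) * (((B:ℝ)+1) * B.factorial) ≠ 0 := by positivity
  have hD0 : ((A.factorial:ℝ)) * B.factorial ≠ 0 := mul_ne_zero h5 h6
  rw [div_sub_div _ _ hD1 hD0, div_eq_div_iff (mul_ne_zero hD1 hD0) hD1]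
  linear_combination (-((((A:ℝ)+1) * A.factorial * (((B:ℝ)+1) * B.factorial)) * ((q.factorial:ℝ) * q.factorial) * ((A.factorial:ℝ) * B.factorial))) * hx

lemma coef_step (q : ℕ) (k : ℤ) (hk1 : -(q:ℤ) - 1 ≤ k) (hk2 : k ≤ (q:ℤ) + 1) :
    bCoef (q+1) k = (if k ∈ Finset.Icc (-(q:ℤ)) (q:ℤ) then bCoef q k else 0)
      - cC (q+1) * (-1:ℝ)^k * ((2*q+2).choose ((q:ℤ) + 1 + k).toNat) := by
  have hq1 : ((q:ℝ)+1) ≠ 0 := by positivity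
  have hCn := hCne q
  rcases eq_or_ne k 0 with rfl | hk0
  · -- k = 0
    simp only [bCoef, if_pos rfl]
    rw [if_pos (show (0:ℤ) ∈ Finset.Icc (-(q:ℤ)) (q:ℤ) by simp), cC_succ]
    have htop : Finset.Icc 1 (q+1) = insert (q+1) (Finset.Icc 1 q) := by
      ext x; simp only [Finset.mem_insert, Finset.mem_Icc]; try omega
    rw [htop, Finset.sum_insert (by simp only [Finset.mem_Icc]; try omega)]
    rw [show ((q:ℤ)+1+0).toNat = q+1 by omega]
    rw [show ((-1:ℝ)^(0:ℤ)) = 1 by norm_num]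
    push_cast
    field_simp
    ring
  · -- k ≠ 0
    have hkR : ((k:ℝ)) ≠ 0 := by exact_mod_cast hk0
    rcases eq_or_ne k ((q:ℤ)+1) with rfl | hktop
    · -- k = q+1
      rw [if_neg (by simp only [Finset.mem_Icc]; try omega)]
      simp only [bCoef, if_neg hk0]
      rw [cC_succ]
      rw [show (((q+1:ℕ):ℤ) + ((q:ℤ)+1)).toNat = 2*q+2 by omega,
        show (((q+1:ℕ):ℤ) - ((q:ℤ)+1)).toNat = 0 by omega,
        show ((q:ℤ) + 1 + ((q:ℤ)+1)).toNat = 2*q+2 by omega,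
        Nat.choose_self]
    
      have hC := hC_fact q
      have hF := fact_ne (2*q+2)
      have hf1 := fact_ne (q+1)
      push_cast [Nat.factorial_zero]
      field_simp
      linear_combination (-2 * (-1:ℝ)^((q:ℤ)+1)) * hC
    · rcases eq_or_ne k (-((q:ℤ)+1)) with rfl | hkbot
      · -- k = -(q+1)
        rw [if_neg (by simp only [Finset.mem_Icc]; try omega)]
        rw [bCoef_neg, neg_one_zpow_neg]
        simp only [bCoef, if_neg (show ((q:ℤ)+1) ≠ 0 by omega)]
        rw [cC_succ]
        rw [show (((q+1:ℕ):ℤ) + ((q:ℤ)+1)).toNat = 2*q+2 by omega,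
          show (((q+1:ℕ):ℤ) - ((q:ℤ)+1)).toNat = 0 by omega,
          show ((q:ℤ) + 1 + -((q:ℤ)+1)).toNat = 0 by omega,
          Nat.choose_zero_right]
        have hC := hC_fact q
        have hF := fact_ne (2*q+2)
        have hf1 := fact_ne (q+1)
        push_cast [Nat.factorial_zero]
        field_simp
        linear_combination (-2 * (-1:ℝ)^((q:ℤ)+1)) * hC
      · -- interior
        rw [if_pos (by simp only [Finset.mem_Icc]; try omega)]
        simp only [bCoef, if_neg hk0]
        obtain ⟨A, hAi⟩ : ∃ A : ℕ, (A:ℤ) = (q:ℤ) + k := ⟨((q:ℤ)+k).toNat, by omega⟩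
        obtain ⟨B, hBi⟩ : ∃ B : ℕ, (B:ℤ) = (q:ℤ) - k := ⟨((q:ℤ)-k).toNat, by omega⟩
        have hAB : A + B = 2*q := by omega
        rw [show (((q+1:ℕ):ℤ) + k).toNat = A+1 by omega,
          show (((q+1:ℕ):ℤ) - k).toNat = B+1 by omega,
          show ((q:ℤ) + 1 + k).toNat = A+1 by omega,
          show ((q:ℤ) + k).toNat = A by omega,
          show ((q:ℤ) - k).toNat = B by omega]
        have hprod : ((A:ℝ)+1) * ((B:ℝ)+1) = ((q:ℝ)+1)^2 - (k:ℝ)^2 := by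
          have h1 : ((A:ℝ)) = (q:ℝ) + (k:ℝ) := by exact_mod_cast hAi
          have h2 : ((B:ℝ)) = (q:ℝ) - (k:ℝ) := by exact_mod_cast hBi
          rw [h1, h2]; ring
        have hid1 := main_id1 q A B (k:ℝ) hprod
        have hid2 := main_id2 q A B hAB
        have h5 := fact_ne (A+1)
        have h6 := fact_ne (B+1)
        have h7 := fact_ne A
        have h8 := fact_ne B
        push_cast
        -- goal: -(2e/k²)*((q+1)!(q+1)!)/((A+1)!(B+1)!) = -(2e/k²)*(q!q!)/(A!B!) - cC*e*CA
        have h9 : cC (q+1) * (-1:ℝ)^k * (((2*q+2).choose (A+1)):ℝ)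
            = (-1:ℝ)^k * (2 * ((q.factorial:ℝ) * q.factorial) / ((A+1).factorial * (B+1).factorial)) := by
          rw [mul_comm (cC (q+1)) ((-1:ℝ)^k), mul_assoc, hid2]
        rw [h9]
        field_simp at hid1 ⊢
        linear_combination (-1:ℝ) * hid1

-- (lamInf defined above)

lemma neg_one_zpow_negC (k : ℤ) : (-1 : ℂ) ^ (-k) = (-1 : ℂ) ^ k := by
  rcases Int.even_or_odd k with h | h
  · rw [h.neg_one_zpow, (h.neg).neg_one_zpow]
  · rw [h.neg_one_zpow, (h.neg).neg_one_zpow]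

lemma expand_pow (q : ℕ) (s : ℂ) (hs : s ≠ 0) :
    (2 - s - s⁻¹) ^ (q + 1) =
      ∑ k ∈ Finset.Icc (-(q:ℤ) - 1) ((q:ℤ) + 1),
        (-1 : ℂ) ^ k * ((2*q+2).choose ((q:ℤ) + 1 + k).toNat) * s ^ k := by
  have h0 : 2 - s - s⁻¹ = (s + (-1)) ^ 2 * (-(s⁻¹)) := by field_simp; ring
  rw [h0, mul_pow, ← pow_mul, show 2 * (q+1) = 2*q+2 by ring, add_pow]
  have hneg : (-(s⁻¹)) ^ (q+1) = (-1:ℂ)^(q+1) * s ^ (-((q:ℤ)+1)) := by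
    rw [neg_pow, inv_pow, ← zpow_natCast s, ← zpow_neg]
    push_cast
    ring_nf
  rw [hneg, Finset.sum_mul]
  rw [show Finset.Icc (-(q:ℤ) - 1) ((q:ℤ) + 1)
      = Finset.map ⟨fun j : ℕ => (j:ℤ) - ((q:ℤ)+1), (show Function.Injective (fun j : ℕ => (j:ℤ) - ((q:ℤ)+1)) from fun a b h => by dsimp at h; omega)⟩
          (Finset.range (2*q+3)) by
    ext x
    simp only [Finset.mem_Icc, Finset.mem_map, Finset.mem_range, Function.Embedding.coeFn_mk]
    constructor
    · intro h; exact ⟨(x + q + 1).toNat, by omega, by omega⟩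
    · rintro ⟨a, ha, rfl⟩; omega]
  rw [Finset.sum_map]
  apply Finset.sum_congr rfl
  intro j hj
  simp only [Finset.mem_range] at hj
  simp only [Function.Embedding.coeFn_mk]
  have hj2 : j ≤ 2*q+2 := by omega
  have htoNat : ((q:ℤ) + 1 + ((j:ℤ) - ((q:ℤ)+1))).toNat = j := by omega
  rw [htoNat]
  have hspow : s ^ ((j:ℤ) - ((q:ℤ)+1)) = s ^ j * s ^ (-((q:ℤ)+1)) := by
    rw [sub_eq_add_neg, zpow_add₀ hs, zpow_natCast]
  have hsign : (-1:ℂ) ^ ((j:ℤ) - ((q:ℤ)+1)) = (-1:ℂ) ^ (2*q+2-j) * (-1:ℂ)^(q+1) := by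
    have h3 : (-1:ℂ) ^ (2*q+2-j) = (-1:ℂ) ^ j := by
      rcases Nat.even_or_odd j with h | h
      · have h2 : Even (2*q+2-j) := by rw [Nat.even_iff] at h ⊢; omega
        rw [h.neg_one_pow, h2.neg_one_pow]
      · have h2 : Odd (2*q+2-j) := by rw [Nat.odd_iff] at h ⊢; omega
        rw [h.neg_one_pow, h2.neg_one_pow]
    rw [sub_eq_add_neg, zpow_add₀ (by norm_num : (-1:ℂ) ≠ 0), neg_one_zpow_negC,
      zpow_natCast, show ((q:ℤ)+1) = ((q+1:ℕ):ℤ) by push_cast; ring,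
      zpow_natCast, h3]
  rw [hsign, hspow]
  ring

lemma key (q : ℕ) (s : ℂ) (hs : s ≠ 0) :
    lamInf q s = -∑ m ∈ Finset.Icc 1 q, ((cC m : ℝ) : ℂ) * (2 - s - s⁻¹) ^ m := by
  induction q with
  | zero => simp [lamInf, bCoef]
  | succ n ih =>
    have hIcc : Finset.Icc (-((n+1:ℕ):ℤ)) ((n+1:ℕ):ℤ) = Finset.Icc (-(n:ℤ)-1) ((n:ℤ)+1) := by
      congr 1 <;> push_cast <;> ring
    unfold lamInf
    rw [hIcc]
    have step : ∀ k ∈ Finset.Icc (-(n:ℤ)-1) ((n:ℤ)+1),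
        (bCoef (n+1) k : ℂ) * s ^ k
          = (if k ∈ Finset.Icc (-(n:ℤ)) (n:ℤ) then (bCoef n k : ℂ) * s ^ k else 0)
            - (cC (n+1) : ℂ) * ((-1:ℂ)^k * (((2*n+2).choose ((n:ℤ)+1+k).toNat : ℕ) : ℂ) * s ^ k) := by
      intro k hk
      simp only [Finset.mem_Icc] at hk
      rw [coef_step n k hk.1 hk.2]
      push_cast
      split_ifs with h
      · ring
      · simp only [Complex.ofReal_zero, zero_mul, zero_sub, neg_inj]
        ring
    rw [Finset.sum_congr rfl step, Finset.sum_sub_distrib]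
    have h1 : (∑ k ∈ Finset.Icc (-(n:ℤ)-1) ((n:ℤ)+1),
        if k ∈ Finset.Icc (-(n:ℤ)) (n:ℤ) then (bCoef n k : ℂ) * s ^ k else 0)
        = lamInf n s := by
      rw [Finset.sum_ite_mem,
        Finset.inter_eq_right.mpr (fun x => by simp only [Finset.mem_Icc]; omega)]
      rfl
    have h2 : (∑ k ∈ Finset.Icc (-(n:ℤ)-1) ((n:ℤ)+1),
        (cC (n+1) : ℂ) * ((-1:ℂ)^k * (((2*n+2).choose ((n:ℤ)+1+k).toNat : ℕ) : ℂ) * s ^ k))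
        = (cC (n+1) : ℂ) * (2 - s - s⁻¹)^(n+1) := by
      rw [← Finset.mul_sum, ← expand_pow n s hs]
    rw [h1, h2, ih]
    rw [show Finset.Icc 1 (n+1) = insert (n+1) (Finset.Icc 1 n) from by
        ext x; simp only [Finset.mem_insert, Finset.mem_Icc]; omega,
      Finset.sum_insert (by simp only [Finset.mem_Icc]; omega)]
    ring

lemma sum_Icc_symm (n : ℕ) (f : ℤ → ℂ) :
    ∑ k ∈ Finset.Icc (-(n:ℤ)) n, f k = f 0 + ∑ k ∈ Finset.Icc (1:ℤ) n, (f k + f (-k)) := by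
  induction n with
  | zero => simp
  | succ n ih =>
    have h1 : Finset.Icc (-(n+1:ℕ):ℤ) ((n+1:ℕ):ℤ) =
        insert (-(n+1:ℤ)) (insert ((n+1:ℤ)) (Finset.Icc (-(n:ℤ)) n)) := by
      ext x; simp; omega
    have h2 : Finset.Icc (1:ℤ) ((n+1:ℕ):ℤ) = insert ((n+1:ℤ)) (Finset.Icc (1:ℤ) n) := by
      ext x; simp; omega
    rw [h1, h2,
      Finset.sum_insert (by simp only [Finset.mem_insert, Finset.mem_Icc]; omega),
      Finset.sum_insert (by simp only [Finset.mem_insert, Finset.mem_Icc]; omega),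
      Finset.sum_insert (by simp only [Finset.mem_insert, Finset.mem_Icc]; omega), ih]
    ring

lemma lamInf_exp_eq (q : ℕ) (θ : ℝ) :
    lamInf q (Complex.exp (θ * Complex.I)) =
      ((bCoef q 0 + 2 * ∑ k ∈ Finset.Icc 1 q, bCoef q (k : ℤ) * Real.cos (k * θ) : ℝ) : ℂ) := by
  unfold lamInf
  rw [sum_Icc_symm]
  push_cast
  rw [zpow_zero, mul_one]
  congr 1
  rw [Finset.mul_sum]
  rw [show Finset.Icc (1:ℤ) (q:ℤ)
      = Finset.map ⟨Nat.cast, Nat.cast_injective⟩ (Finset.Icc 1 q) by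
    ext x
    simp only [Finset.mem_Icc, Finset.mem_map, Function.Embedding.coeFn_mk]
    constructor
    · intro h; exact ⟨x.toNat, by omega, by omega⟩
    · rintro ⟨a, ha, rfl⟩; omega]
  rw [Finset.sum_map]
  apply Finset.sum_congr rfl
  intro k hk
  simp only [Function.Embedding.coeFn_mk]
  rw [bCoef_neg]
  rw [← Complex.exp_int_mul, ← Complex.exp_int_mul]
  rw [Complex.cos]
  push_cast
  ring_nf


theorem lamInf_real_zero_neg (q : ℕ) (hq : 1 ≤ q) :
    (∀ θ : ℝ, lamInf q (Complex.exp (θ * Complex.I)) =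
      ((bCoef q 0 + 2 * ∑ k ∈ Finset.Icc 1 q, bCoef q (k : ℤ) * Real.cos (k * θ) : ℝ) : ℂ)) ∧
    lamInf q 1 = 0 ∧
    (∀ θ : ℝ, 0 < θ → θ < 2 * Real.pi →
      (lamInf q (Complex.exp (θ * Complex.I))).re < 0) := by
  refine ⟨lamInf_exp_eq q, ?_, ?_⟩
  · rw [key q 1 one_ne_zero, neg_eq_zero]
    apply Finset.sum_eq_zero
    intro m hm
    simp only [Finset.mem_Icc] at hm
    rw [show (2 - 1 - (1:ℂ)⁻¹) = 0 by norm_num, zero_pow (by omega), mul_zero]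
  · intro θ h1 h2
    have hs : Complex.exp (↑θ * Complex.I) ≠ 0 := Complex.exp_ne_zero _
    rw [key q _ hs]
    have hval : 2 - Complex.exp (↑θ * Complex.I) - (Complex.exp (↑θ * Complex.I))⁻¹
        = ((2 - 2 * Real.cos θ : ℝ) : ℂ) := by
      rw [← Complex.exp_neg]
      push_cast
      rw [Complex.cos]
      ring_nf
    rw [hval]
    have hcos : Real.cos θ < 1 := by
      rcases lt_or_eq_of_le (Real.cos_le_one θ) with h | h
      · exact h
      · exfalso
        have := (Real.cos_eq_one_iff_of_lt_of_lt
          (by linarith [Real.pi_pos] : -(2*Real.pi) < θ) h2).mp h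
        linarith
    have ht : (0:ℝ) < 2 - 2 * Real.cos θ := by linarith
    have hcast : -∑ m ∈ Finset.Icc 1 q, ((cC m : ℝ):ℂ) * ((2 - 2*Real.cos θ : ℝ):ℂ) ^ m
        = ((-∑ m ∈ Finset.Icc 1 q, cC m * (2 - 2*Real.cos θ) ^ m : ℝ) : ℂ) := by
      push_cast
      ring
    rw [hcast, Complex.ofReal_re, neg_lt, neg_zero]
    apply Finset.sum_pos
    · intro m hm
      simp only [Finset.mem_Icc] at hm
      have hch : (0:ℝ) < ((2*m).choose m : ℝ) := by
        exact_mod_cast Nat.choose_pos (by omega)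
      have hm0 : (0:ℝ) < (m:ℝ) := by exact_mod_cast hm.1
      unfold cC
      positivity
    · exact ⟨1, by simp only [Finset.mem_Icc]; omega⟩
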